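/- Let g ≥ 2 and d₀ ∈ {0,1,2,3} be integers, let m_0, …, m_{g−2} be natural numbers, let p₀ be a nonzero complex number, and define the polynomial p(t) = p₀·∏_{k=0}^{g−2}(t⁴ − (2k)⁴)^{m_k} ∈ ℂ[t] of degree d, with coefficients p(t) = Σ_{j=0}^{d} p_j t^j. Let a : ℕ → ℂ be a sequence and C a nonzero complex number such that for every n ∈ ℕ: Σ_{j=0}^{d} p_j·a(n+j) = C·(2g−2)^n if n ≡ d₀ (mod 4), and Σ_{j=0}^{d} p_j·a(n+j) = 0 otherwise. Then there exists a nonzero complex number c such that a(d₀ + 4n)/(2g−2)^{d₀+4n} → c as n → ∞. -/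

import Mathlib

open Polynomial Filter

namespace DonAux

noncomputable def S : Module.End ℂ (ℕ → ℂ) :=
{ toFun := fun b n => b (n+1),
  map_add' := fun _ _ => rfl,
  map_smul' := fun _ _ => rfl }

lemma S_apply (b : ℕ → ℂ) (n : ℕ) : S b n = b (n+1) := rfl

lemma S_pow_apply (i : ℕ) (b : ℕ → ℂ) (n : ℕ) : (S ^ i) b n = b (n + i) := by
  induction i generalizing b n with
  | zero => rfl
  | succ i ih =>
    rw [pow_succ, Module.End.mul_apply, ih, S_apply]
    congr 1

lemma aeval_S_apply (q : ℂ[X]) (b : ℕ → ℂ) (n : ℕ) :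
    aeval S q b n = ∑ j ∈ Finset.range (q.natDegree + 1), q.coeff j * b (n + j) := by
  rw [Polynomial.aeval_eq_sum_range]
  simp [LinearMap.sum_apply, S_pow_apply]

lemma contraction {mu : ℂ} (hmu : ‖mu‖ < 1) {d e : ℕ → ℂ}
    (hde : ∀ n, d (n + 1) = mu * d n + e n)
    (he : Tendsto e atTop (nhds 0)) : Tendsto d atTop (nhds 0) := by
  set q : ℝ := ‖mu‖ with hq
  have hq0 : 0 ≤ q := norm_nonneg mu
  have h1q : 0 < 1 - q := by linarith
  rw [NormedAddCommGroup.tendsto_nhds_zero] at he ⊢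
  intro ε hε
  have hδ : (0:ℝ) < ε * (1 - q) / 2 := by positivity
  obtain ⟨N, hN⟩ := (Filter.eventually_atTop).mp (he _ hδ)
  have key : ∀ k, ‖d (N + k)‖ ≤ q ^ k * ‖d N‖ + ε / 2 := by
    intro k
    induction k with
    | zero => simp; nlinarith
    | succ k ih =>
      have h1 : ‖d (N + (k+1))‖ ≤ q * ‖d (N + k)‖ + ε * (1 - q) / 2 := by
        have := hN (N + k) (by omega)
        calc ‖d (N + (k+1))‖ = ‖mu * d (N + k) + e (N + k)‖ := by
              rw [show N + (k+1) = (N + k) + 1 by omega, hde]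
          _ ≤ ‖mu * d (N + k)‖ + ‖e (N + k)‖ := norm_add_le _ _
          _ ≤ q * ‖d (N + k)‖ + ε * (1 - q) / 2 := by
              rw [norm_mul]; exact add_le_add le_rfl this.le
      calc ‖d (N + (k+1))‖ ≤ q * ‖d (N + k)‖ + ε * (1 - q) / 2 := h1
        _ ≤ q * (q ^ k * ‖d N‖ + ε / 2) + ε * (1 - q) / 2 := by
            exact add_le_add (mul_le_mul_of_nonneg_left ih hq0) le_rfl
        _ ≤ q ^ (k+1) * ‖d N‖ + ε / 2 := by
            rw [pow_succ]; nlinarith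
  have hpow : Tendsto (fun k => q ^ k * ‖d N‖) atTop (nhds 0) := by
    simpa using (tendsto_pow_atTop_nhds_zero_of_lt_one hq0 hmu).mul_const ‖d N‖
  obtain ⟨K, hK⟩ := (Filter.eventually_atTop).mp
    ((hpow.eventually (gt_mem_nhds (by positivity : (0:ℝ) < ε/2))))
  rw [Filter.eventually_atTop]
  refine ⟨N + K, fun n hn => ?_⟩
  have hnk : n = N + (n - N) := by omega
  calc ‖d n‖ = ‖d (N + (n - N))‖ := by rw [← hnk]
    _ ≤ q ^ (n - N) * ‖d N‖ + ε / 2 := key _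
    _ < ε / 2 + ε / 2 := by
        have := hK (n - N) (by omega)
        linarith
    _ = ε := by ring

def Good (lam : ℂ) (p : ℂ[X]) : Prop :=
  ∀ b : ℕ → ℂ, Tendsto (fun n => aeval S p b n / lam ^ n) atTop (nhds 0) →
    Tendsto (fun n => b n / lam ^ n) atTop (nhds 0)

lemma good_one (lam : ℂ) : Good lam 1 := by
  intro b h
  simpa using h

lemma good_mul {lam : ℂ} {p q : ℂ[X]} (hp : Good lam p) (hq : Good lam q) :
    Good lam (p * q) := by
  intro b h
  refine hq b (hp _ ?_)
  have he : (fun n => aeval S p (aeval S q b) n / lam ^ n)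
      = fun n => aeval S (p * q) b n / lam ^ n := by
    funext n
    rw [map_mul]
    rfl
  rw [he]
  exact h

lemma good_pow {lam : ℂ} {p : ℂ[X]} (hp : Good lam p) (k : ℕ) : Good lam (p ^ k) := by
  induction k with
  | zero => simpa using good_one lam
  | succ k ih => rw [pow_succ]; exact good_mul ih hp

lemma good_C {lam c : ℂ} (hc : c ≠ 0) : Good lam (Polynomial.C c) := by
  intro b h
  have h1 : ∀ n, aeval S (Polynomial.C c) b n = c * b n := by
    intro n
    rw [aeval_C]
    simp [Module.algebraMap_end_apply]
  have h2 := h.const_mul c⁻¹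
  simp only [mul_zero] at h2
  refine h2.congr fun n => ?_
  rw [h1]
  field_simp

lemma good_linear {lam r : ℂ} (h : ‖r‖ < ‖lam‖) : Good lam (X - Polynomial.C r) := by
  intro b hb
  have hlam : lam ≠ 0 := by
    intro h0
    rw [h0, norm_zero] at h
    exact absurd h (not_lt.mpr (norm_nonneg r))
  have hnl : (0:ℝ) < ‖lam‖ := norm_pos_iff.mpr hlam
  have h1 : ∀ n, aeval S (X - Polynomial.C r) b n = b (n+1) - r * b n := by
    intro n
    rw [map_sub, LinearMap.sub_apply, Pi.sub_apply, aeval_X, aeval_C]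
    simp [Module.algebraMap_end_apply, S_apply]
  have hmu : ‖r / lam‖ < 1 := by
    rw [norm_div, div_lt_one hnl]; exact h
  refine contraction hmu (d := fun n => b n / lam ^ n)
    (e := fun n => (b (n+1) - r * b n) / lam ^ (n+1)) (fun n => ?_) ?_
  · field_simp
    ring
  · have := hb.div_const lam
    simp only [zero_div] at this
    refine this.congr fun n => ?_
    rw [h1, pow_succ, div_div]

lemma quartic_factor (c : ℂ) :
    (X ^ 4 - Polynomial.C (c ^ 4) : ℂ[X]) =
      (X - Polynomial.C c) * (X - Polynomial.C (-c)) *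
      (X - Polynomial.C (c * Complex.I)) * (X - Polynomial.C (-(c * Complex.I))) := by
  have hI : (Polynomial.C Complex.I : ℂ[X]) ^ 2 = -1 := by
    rw [← map_pow, Complex.I_sq]; simp
  simp only [map_neg, map_mul, map_pow]
  linear_combination (Polynomial.C c : ℂ[X]) ^ 2 * (X ^ 2 - (Polynomial.C c) ^ 2) * hI

lemma good_quartic {lam c : ℂ} (h : ‖c‖ < ‖lam‖) :
    Good lam (X ^ 4 - Polynomial.C (c ^ 4)) := by
  rw [quartic_factor]
  have h2 : ‖c * Complex.I‖ < ‖lam‖ := by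
    rwa [norm_mul, Complex.norm_I, mul_one]
  exact good_mul (good_mul (good_mul (good_linear h)
    (good_linear (by rwa [norm_neg]))) (good_linear h2))
    (good_linear (by rwa [norm_neg]))

lemma pow_eigen {T : Module.End ℂ (ℕ → ℂ)} {f : ℕ → ℂ} {mu : ℂ}
    (hf : T f = mu • f) (i : ℕ) : (T ^ i) f = mu ^ i • f := by
  induction i with
  | zero => simp
  | succ i ih =>
    rw [pow_succ, Module.End.mul_apply, hf, map_smul, ih, smul_smul, pow_succ]
    ring_nf

lemma aeval_eigen {T : Module.End ℂ (ℕ → ℂ)} {f : ℕ → ℂ} {mu : ℂ}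
    (hf : T f = mu • f) (q : ℂ[X]) : aeval T q f = q.eval mu • f := by
  induction q using Polynomial.induction_on' with
  | add p q hp hq =>
    rw [map_add, LinearMap.add_apply, hp, hq, eval_add, add_smul]
  | monomial i c =>
    rw [aeval_monomial, eval_monomial, Module.End.mul_apply, pow_eigen hf,
      map_smul, Module.algebraMap_end_apply, smul_smul, mul_comm]

end DonAux

open Polynomial Filter in
/-- Generating-function asymptotics lemma: if
`p(t) = p₀·∏_{k=0}^{g-2}(t⁴-(2k)⁴)^{m_k}` has degree `d` and coefficients
`p_j`, and the sequence `a` satisfies `∑_{j=0}^{d} p_j·a(n+j) = C(2g-2)ⁿ` for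
`n ≡ d₀ (mod 4)` and `= 0` otherwise, with `C ≠ 0`, then
`a(d₀+4n)/(2g-2)^{d₀+4n}` converges to some nonzero limit `c`. -/
theorem donaldson_asymptotics (g : ℕ) (hg : 2 ≤ g) (d₀ : ℕ) (hd₀ : d₀ ≤ 3)
    (m : ℕ → ℕ) (p₀ : ℂ) (hp₀ : p₀ ≠ 0)
    (p : Polynomial ℂ)
    (hp : p = C p₀ * ∏ k ∈ Finset.range (g - 1),
      (X ^ 4 - C ((2 * k : ℂ) ^ 4)) ^ (m k))
    (d : ℕ) (hd : d = p.natDegree)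
    (a : ℕ → ℂ) (C₀ : ℂ) (hC₀ : C₀ ≠ 0)
    (hrec : ∀ n : ℕ,
      (n % 4 = d₀ % 4 →
        ∑ j ∈ Finset.range (d + 1), p.coeff j * a (n + j) =
          C₀ * (2 * (g : ℂ) - 2) ^ n) ∧
      (n % 4 ≠ d₀ % 4 →
        ∑ j ∈ Finset.range (d + 1), p.coeff j * a (n + j) = 0)) :
    ∃ c : ℂ, c ≠ 0 ∧
      Tendsto (fun n : ℕ => a (d₀ + 4 * n) / (2 * (g : ℂ) - 2) ^ (d₀ + 4 * n))
        atTop (nhds c) := by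
  classical
  set lam : ℂ := 2 * (g : ℂ) - 2 with hlam
  have hlamR : lam = ((2 * (g : ℝ) - 2 : ℝ) : ℂ) := by push_cast [hlam]; ring
  have hgR : (2 : ℝ) ≤ 2 * (g : ℝ) - 2 := by
    have : (2 : ℝ) ≤ (g : ℝ) := by exact_mod_cast hg
    linarith
  have hlam0 : lam ≠ 0 := by
    rw [hlamR]
    exact_mod_cast (by linarith : (2 * (g : ℝ) - 2) ≠ 0)
  have hnormlam : ‖lam‖ = 2 * (g : ℝ) - 2 := by
    rw [hlamR, Complex.norm_real, Real.norm_eq_abs, abs_of_nonneg (by linarith)]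
  set f : ℕ → ℂ := fun n => if n % 4 = d₀ % 4 then C₀ * lam ^ n else 0 with hfdef
  have h1 : ∀ n, aeval DonAux.S p a n = f n := by
    intro n
    rw [DonAux.aeval_S_apply, ← hd]
    show _ = if n % 4 = d₀ % 4 then C₀ * lam ^ n else 0
    by_cases hn : n % 4 = d₀ % 4
    · rw [if_pos hn]; exact (hrec n).1 hn
    · rw [if_neg hn]; exact (hrec n).2 hn
  set qp : Polynomial ℂ := C p₀ * ∏ k ∈ Finset.range (g - 1),
      (X - C ((2 * k : ℂ) ^ 4)) ^ (m k) with hqp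
  have hcomp : qp.comp (X ^ 4) = p := by
    rw [hp, hqp, comp_eq_aeval, map_mul, map_prod]
    simp [map_pow, map_sub, aeval_X, aeval_C, Polynomial.algebraMap_eq]
  have hSf : (DonAux.S ^ 4) f = lam ^ 4 • f := by
    funext n
    rw [DonAux.S_pow_apply]
    show (if (n + 4) % 4 = d₀ % 4 then C₀ * lam ^ (n+4) else 0) = _
    have h4 : (n + 4) % 4 = n % 4 := Nat.add_mod_right n 4
    simp only [h4, Pi.smul_apply, smul_eq_mul, hfdef]
    by_cases hn : n % 4 = d₀ % 4
    · rw [if_pos hn, if_pos hn, pow_add]; ring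
    · rw [if_neg hn, if_neg hn, mul_zero]
  have hXS : aeval DonAux.S (X ^ 4 : Polynomial ℂ) = DonAux.S ^ 4 := by
    rw [map_pow, aeval_X]
  have hevq : p.eval lam = qp.eval (lam ^ 4) := by
    rw [← hcomp, eval_comp, eval_pow, eval_X]
  have h3 : aeval DonAux.S p f = p.eval lam • f := by
    rw [← hcomp, aeval_comp, hXS, DonAux.aeval_eigen hSf, eval_comp, eval_pow, eval_X]
  have hev : p.eval lam ≠ 0 := by
    rw [hevq, hqp]
    simp only [eval_mul, eval_C, eval_prod, eval_pow, eval_sub, eval_X]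
    refine mul_ne_zero hp₀ (Finset.prod_ne_zero_iff.mpr fun k hk => ?_)
    refine pow_ne_zero _ (sub_ne_zero.mpr ?_)
    rw [Finset.mem_range] at hk
    have hk2 : (k : ℝ) + 2 ≤ (g : ℝ) := by
      exact_mod_cast (by omega : k + 2 ≤ g)
    have hklt : (2 * (k : ℝ)) < 2 * (g : ℝ) - 2 := by linarith
    have hk0 : (0 : ℝ) ≤ 2 * (k : ℝ) := by positivity
    have hlt : (2 * (k : ℝ)) ^ 4 < (2 * (g : ℝ) - 2) ^ 4 :=
      pow_lt_pow_left₀ hklt hk0 (by norm_num)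
    have : ((2 * (g : ℝ) - 2) ^ 4 : ℂ) ≠ ((2 * (k : ℝ)) ^ 4 : ℂ) := by
      exact_mod_cast ne_of_gt hlt
    rw [hlamR]
    push_cast
    push_cast at this
    convert this using 2 <;> norm_num
  have h5 : DonAux.Good lam p := by
    rw [hp]
    refine DonAux.good_mul (DonAux.good_C hp₀) ?_
    refine Finset.prod_induction _ (DonAux.Good lam)
      (fun _ _ => DonAux.good_mul) (DonAux.good_one lam) fun k hk => ?_
    refine DonAux.good_pow (DonAux.good_quartic ?_) (m k)
    have hk2 : (k : ℝ) + 2 ≤ (g : ℝ) := by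
      exact_mod_cast (by rw [Finset.mem_range] at hk; omega : k + 2 ≤ g)
    have hnk : ‖(2 * (k : ℂ))‖ = 2 * (k : ℝ) := by
      have : (2 * (k : ℂ)) = ((2 * (k : ℝ) : ℝ) : ℂ) := by push_cast; ring
      rw [this, Complex.norm_real, Real.norm_eq_abs, abs_of_nonneg (by positivity)]
    rw [hnk, hnormlam]
    linarith
  set b : ℕ → ℂ := fun n => a n - (p.eval lam)⁻¹ * f n with hbdef
  have hbfun : b = a - (p.eval lam)⁻¹ • f := rfl
  have h4 : ∀ n, aeval DonAux.S p b n = 0 := by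
    intro n
    rw [hbfun, map_sub, map_smul]
    simp only [Pi.sub_apply, Pi.smul_apply, smul_eq_mul]
    rw [h1, h3]
    simp only [Pi.smul_apply, smul_eq_mul]
    field_simp
    ring
  have h6 : Tendsto (fun n => b n / lam ^ n) atTop (nhds 0) := by
    refine h5 b ?_
    have : (fun n => aeval DonAux.S p b n / lam ^ n) = fun _ => (0 : ℂ) := by
      funext n; rw [h4 n, zero_div]
    rw [this]
    exact tendsto_const_nhds
  have hsub : Tendsto (fun n : ℕ => d₀ + 4 * n) atTop atTop :=
    (strictMono_nat_of_lt_succ (by intro n; omega)).tendsto_atTop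
  refine ⟨(p.eval lam)⁻¹ * C₀, mul_ne_zero (inv_ne_zero hev) hC₀, ?_⟩
  have h7 := (h6.comp hsub).add_const ((p.eval lam)⁻¹ * C₀)
  rw [zero_add] at h7
  refine h7.congr fun n => ?_
  show b (d₀ + 4 * n) / lam ^ (d₀ + 4 * n) + (p.eval lam)⁻¹ * C₀
      = a (d₀ + 4 * n) / lam ^ (d₀ + 4 * n)
  have hfv : f (d₀ + 4 * n) = C₀ * lam ^ (d₀ + 4 * n) := by
    rw [hfdef]
    simp [Nat.add_mul_mod_self_left]
  simp only [hbdef]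
  rw [hfv]
  field_simp
  ring
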